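/- For the HSA dynamo vector field X = (x(y-1) - βz)∂ₓ + (α(1-x²))∂_y + x·∂_z (i.e., κ = λ = 0) with α ≠ 0, the function g(x,y,z) = -x²/2 + y/α - y²/(2α) - β·z²/2 satisfies X g = 1 - y; consequently exp(g) is an exponential factor with cofactor 1 - y. -/

import Mathlib

private lemma dgx (α β y z : ℝ) (x : ℝ) :
    HasDerivAt (fun x' : ℝ => -x' ^ 2 / 2 + y / α - y ^ 2 / (2 * α) - β * z ^ 2 / 2)
      (-x) x := by
  have h : HasDerivAt (fun x' : ℝ => x' ^ 2) (2 * x) x := by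
    simpa using (hasDerivAt_pow 2 x)
  have := (((h.neg.div_const 2).add_const (y / α)).sub_const (y ^ 2 / (2 * α))).sub_const
      (β * z ^ 2 / 2)
  exact this.congr_deriv (by ring)

private lemma dgy (α β x z : ℝ) (y : ℝ) :
    HasDerivAt (fun y' : ℝ => -x ^ 2 / 2 + y' / α - y' ^ 2 / (2 * α) - β * z ^ 2 / 2)
      (1 / α - y / α) y := by
  have h1 : HasDerivAt (fun y' : ℝ => y' / α) (1 / α) y := by
    simpa using (hasDerivAt_id y).div_const α
  have hp : HasDerivAt (fun y' : ℝ => y' ^ 2) (2 * y) y := by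
    simpa using (hasDerivAt_pow 2 y)
  have h2 : HasDerivAt (fun y' : ℝ => y' ^ 2 / (2 * α)) (2 * y / (2 * α)) y :=
    hp.div_const (2 * α)
  have := (((hasDerivAt_const y (-x ^ 2 / 2)).add h1).sub h2).sub_const (β * z ^ 2 / 2)
  exact this.congr_deriv (by ring)

private lemma dgz (α β x y : ℝ) (z : ℝ) :
    HasDerivAt (fun z' : ℝ => -x ^ 2 / 2 + y / α - y ^ 2 / (2 * α) - β * z' ^ 2 / 2)
      (-(β * z)) z := by
  have h : HasDerivAt (fun z' : ℝ => z' ^ 2) (2 * z) z := by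
    simpa using (hasDerivAt_pow 2 z)
  have := (hasDerivAt_const z (-x ^ 2 / 2 + y / α - y ^ 2 / (2 * α))).sub
      ((h.const_mul β).div_const 2)
  exact this.congr_deriv (by ring)

private lemma key (α β : ℝ) (hα : α ≠ 0) (x y z : ℝ) :
    (x * (y - 1) - β * z) * (-x) + (α * (1 - x ^ 2)) * (1 / α - y / α)
      + x * (-(β * z)) = 1 - y := by
  field_simp
  ring

theorem stmt_5 (α β : ℝ) (hα : α ≠ 0) (x y z : ℝ) :
    (x * (y - 1) - β * z) *
        deriv (fun x' : ℝ => -x' ^ 2 / 2 + y / α - y ^ 2 / (2 * α) - β * z ^ 2 / 2) x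
      + (α * (1 - x ^ 2)) *
        deriv (fun y' : ℝ => -x ^ 2 / 2 + y' / α - y' ^ 2 / (2 * α) - β * z ^ 2 / 2) y
      + x *
        deriv (fun z' : ℝ => -x ^ 2 / 2 + y / α - y ^ 2 / (2 * α) - β * z' ^ 2 / 2) z
      = 1 - y ∧
    ∀ x y z : ℝ,
      (x * (y - 1) - β * z) *
          deriv (fun x' : ℝ =>
            Real.exp (-x' ^ 2 / 2 + y / α - y ^ 2 / (2 * α) - β * z ^ 2 / 2)) x
        + (α * (1 - x ^ 2)) *
          deriv (fun y' : ℝ =>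
            Real.exp (-x ^ 2 / 2 + y' / α - y' ^ 2 / (2 * α) - β * z ^ 2 / 2)) y
        + x *
          deriv (fun z' : ℝ =>
            Real.exp (-x ^ 2 / 2 + y / α - y ^ 2 / (2 * α) - β * z' ^ 2 / 2)) z
        = (1 - y) * Real.exp (-x ^ 2 / 2 + y / α - y ^ 2 / (2 * α) - β * z ^ 2 / 2) := by
  constructor
  · rw [(dgx α β y z x).deriv, (dgy α β x z y).deriv, (dgz α β x y z).deriv]
    exact key α β hα x y z
  · intro x y z
    rw [((dgx α β y z x).exp).deriv, ((dgy α β x z y).exp).deriv, ((dgz α β x y z).exp).deriv]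
    set E := Real.exp (-x ^ 2 / 2 + y / α - y ^ 2 / (2 * α) - β * z ^ 2 / 2)
    have := key α β hα x y z
    nlinarith [this, Real.exp_pos (-x ^ 2 / 2 + y / α - y ^ 2 / (2 * α) - β * z ^ 2 / 2)]
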